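/- Equivalence of the two extensions: for a linear map P : V → S, the following are equivalent: (i) P extends to a bounded linear projection P̄ : X → X with range S (P̄ ∘ P̄ = P̄, P̄(X) = S, P̄|_V = P); (ii) there exists a bounded bilinear form β : X × S → ℝ (i.e. |β(x,σ)| ≤ K‖x‖‖σ‖ for some K) such that β(s,σ) = b(s,σ) for all s, σ ∈ S and β(v,σ) = b(P v, σ) for all v ∈ V, σ ∈ S. -/

import Mathlib

set_option maxHeartbeats 1000000
set_option synthInstance.maxHeartbeats 400000

/-- **Equivalence of the two extensions.** For a linear map `P : V → S`, `P` extends to a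
bounded linear projection `P̄ : X → X` with range `S` if and only if there exists a bounded
bilinear form `β : X × S → ℝ` extending both `b` and `(v,σ) ↦ b(P v, σ)`. -/
theorem extension_projection_iff_extension_bilinear
    {X : Type*} [NormedAddCommGroup X] [InnerProductSpace ℝ X] [CompleteSpace X]
    (V S : Submodule ℝ X) [CompleteSpace V] [FiniteDimensional ℝ S]
    (hSne : S ≠ ⊥) (hsum : V ⊔ S = ⊤)
    (b : S →ₗ[ℝ] S →ₗ[ℝ] ℝ) (hb : ∀ s : S, (∀ σ : S, b s σ = 0) → s = 0)
    (P : V →ₗ[ℝ] S) :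
    (∃ Pbar : X →L[ℝ] X,
        (∀ x : X, Pbar (Pbar x) = Pbar x) ∧ Set.range Pbar = (S : Set X) ∧
          ∀ v : V, Pbar v = (P v : X)) ↔
      (∃ β : X →ₗ[ℝ] S →ₗ[ℝ] ℝ,
        (∃ K : ℝ, ∀ (x : X) (σ : S), |β x σ| ≤ K * ‖x‖ * ‖σ‖) ∧
          (∀ s σ : S, β (s : X) σ = b s σ) ∧
            ∀ (v : V) (σ : S), β (v : X) σ = b (P v) σ) := by
  constructor
  · rintro ⟨Pbar, hproj, hrange, hext⟩
    letI i1 : SeminormedAddCommGroup (S →L[ℝ] ℝ) := inferInstance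
    letI i2 : NormedSpace ℝ (S →L[ℝ] ℝ) := inferInstance
    -- Pbar fixes S
    have hfix : ∀ s : S, Pbar (s : X) = (s : X) := by
      intro s
      have : (s : X) ∈ Set.range Pbar := by rw [hrange]; exact s.2
      obtain ⟨x, hx⟩ := this
      rw [← hx, hproj, hx]
    have hmem : ∀ x : X, Pbar x ∈ S := by
      intro x
      have : Pbar x ∈ Set.range Pbar := ⟨x, rfl⟩
      rwa [hrange] at this
    -- Q : X →ₗ S
    let Q : X →ₗ[ℝ] S := (Pbar : X →ₗ[ℝ] X).codRestrict S hmem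
    -- b is bounded on finite-dimensional S
    let bc : S →L[ℝ] S →L[ℝ] ℝ :=
      LinearMap.toContinuousLinearMap
        ((LinearMap.toContinuousLinearMap (𝕜 := ℝ) (E := S) (F' := ℝ)).toLinearMap.comp b)
    have hbc : ∀ s σ : S, bc s σ = b s σ := fun s σ => rfl
    refine ⟨b.comp Q, ⟨‖bc‖ * ‖Pbar‖, ?_⟩, ?_, ?_⟩
    · intro x σ
      have h1 : |b (Q x) σ| ≤ ‖bc‖ * ‖Q x‖ * ‖σ‖ := by
        calc |b (Q x) σ| = ‖bc (Q x) σ‖ := by rw [hbc]; rfl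
          _ ≤ ‖bc (Q x)‖ * ‖σ‖ := (bc (Q x)).le_opNorm σ
          _ ≤ ‖bc‖ * ‖Q x‖ * ‖σ‖ :=
            mul_le_mul_of_nonneg_right (bc.le_opNorm (Q x)) (norm_nonneg σ)
      have h2 : ‖Q x‖ ≤ ‖Pbar‖ * ‖x‖ := by
        have : ‖Q x‖ = ‖Pbar x‖ := rfl
        rw [this]; exact Pbar.le_opNorm x
      calc |(b.comp Q) x σ| = |b (Q x) σ| := rfl
        _ ≤ ‖bc‖ * ‖Q x‖ * ‖σ‖ := h1
        _ ≤ ‖bc‖ * (‖Pbar‖ * ‖x‖) * ‖σ‖ := by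
            have := mul_le_mul_of_nonneg_left h2 (norm_nonneg bc)
            exact mul_le_mul_of_nonneg_right this (norm_nonneg σ)
        _ = ‖bc‖ * ‖Pbar‖ * ‖x‖ * ‖σ‖ := by ring
    · intro s σ
      have : Q (s : X) = s := by
        apply Subtype.ext
        show Pbar (s : X) = (s : X)
        exact hfix s
      simp [LinearMap.comp_apply, this]
    · intro v σ
      have : Q (v : X) = P v := by
        apply Subtype.ext
        show Pbar (v : X) = ((P v : S) : X)
        exact hext v
      simp [LinearMap.comp_apply, this]
  · rintro ⟨β, ⟨K, hK⟩, hβS, hβV⟩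
    -- b as nondegenerate bilinear form, giving S ≃ dual S
    have hbnd : LinearMap.BilinForm.Nondegenerate b := LinearMap.BilinForm.Nondegenerate.ofSeparatingLeft hb
    let e : S ≃ₗ[ℝ] Module.Dual ℝ S := LinearMap.BilinForm.toDual b hbnd
    -- T : X →ₗ S
    let T : X →ₗ[ℝ] S := e.symm.toLinearMap.comp β
    have hT : ∀ (x : X) (σ : S), b (T x) σ = β x σ := by
      intro x σ
      exact LinearMap.BilinForm.apply_toDual_symm_apply (B := b) (hB := hbnd) (β x) σ
    -- key: b (T x) σ = β x σ characterizes T x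
    have huniq : ∀ (x : X) (s : S), (∀ σ : S, b s σ = β x σ) → T x = s := by
      intro x s hs
      have : ∀ σ : S, b (T x - s) σ = 0 := by
        intro σ
        rw [map_sub, LinearMap.sub_apply, hT, hs, sub_self]
      exact sub_eq_zero.mp (hb _ this)
    -- make T continuous
    letI i1 : SeminormedAddCommGroup (S →L[ℝ] ℝ) := inferInstance
    letI i2 : NormedSpace ℝ (S →L[ℝ] ℝ) := inferInstance
    let βL : X →ₗ[ℝ] (S →L[ℝ] ℝ) :=
      (LinearMap.toContinuousLinearMap (𝕜 := ℝ) (E := S) (F' := ℝ)).toLinearMap.comp β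
    have hβLb : ∀ x : X, ‖βL x‖ ≤ |K| * ‖x‖ := by
      intro x
      apply ContinuousLinearMap.opNorm_le_bound _ (by positivity)
      intro σ
      calc ‖βL x σ‖ = |β x σ| := rfl
        _ ≤ K * ‖x‖ * ‖σ‖ := hK x σ
        _ ≤ |K| * ‖x‖ * ‖σ‖ := by
            have : K ≤ |K| := le_abs_self K
            have h1 : K * ‖x‖ ≤ |K| * ‖x‖ := mul_le_mul_of_nonneg_right this (norm_nonneg x)
            exact mul_le_mul_of_nonneg_right h1 (norm_nonneg σ)
        _ = |K| * ‖x‖ * ‖σ‖ := rfl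
    let βc : X →L[ℝ] (S →L[ℝ] ℝ) := βL.mkContinuous (|K|) (by
      intro x
      apply ContinuousLinearMap.opNorm_le_bound _ (by positivity)
      intro σ
      calc ‖βL x σ‖ = |β x σ| := rfl
        _ ≤ K * ‖x‖ * ‖σ‖ := hK x σ
        _ ≤ |K| * ‖x‖ * ‖σ‖ := by
            have h1 : K * ‖x‖ ≤ |K| * ‖x‖ :=
              mul_le_mul_of_nonneg_right (le_abs_self K) (norm_nonneg x)
            exact mul_le_mul_of_nonneg_right h1 (norm_nonneg σ))
    let e' : S ≃ₗ[ℝ] (S →L[ℝ] ℝ) := e.trans LinearMap.toContinuousLinearMap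
    let e'c : S ≃L[ℝ] (S →L[ℝ] ℝ) := e'.toContinuousLinearEquiv
    let Tc : X →L[ℝ] S := (e'c.symm : (S →L[ℝ] ℝ) →L[ℝ] S).comp βc
    have hTcT : ∀ x : X, Tc x = T x := by
      intro x
      have h1 : e' (T x) = βc x := by
        show LinearMap.toContinuousLinearMap (e (e.symm (β x))) = βc x
        rw [LinearEquiv.apply_symm_apply]
        rfl
      have h2 : T x = e'.symm (βc x) := by rw [← h1, LinearEquiv.symm_apply_apply]
      show e'c.symm (βc x) = T x
      rw [h2]; rfl
    let Pbar : X →L[ℝ] X := S.subtypeL.comp Tc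
    have hPbar : ∀ x : X, Pbar x = ((T x : S) : X) := by
      intro x; show ((Tc x : S) : X) = _; rw [hTcT]
    have hfixS : ∀ s : S, Pbar (s : X) = (s : X) := by
      intro s
      rw [hPbar]
      congr 1
      exact huniq (s : X) s (fun σ => (hβS s σ).symm)
    refine ⟨Pbar, ?_, ?_, ?_⟩
    · intro x
      have : Pbar x = ((T x : S) : X) := hPbar x
      rw [this, hfixS (T x)]
    · apply Set.Subset.antisymm
      · rintro _ ⟨x, rfl⟩
        rw [hPbar]
        exact (T x).2
      · intro s hs
        exact ⟨s, hfixS ⟨s, hs⟩⟩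
    · intro v
      rw [hPbar]
      congr 1
      exact huniq (v : X) (P v) (fun σ => (hβV v σ).symm)
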